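/- Let (T_n)_{n≥0} be random variables on a probability space that are almost surely nonincreasing in n and converge to 0 almost surely, and let (s_n)_{n≥0} be positive reals strictly decreasing to 0. Define Y(t) := inf{ n ≥ 0 : T_n ≤ t } and v(t) := inf{ n ≥ 0 : s_n ≤ t } for t > 0. Assume (i) s_{n+1}/s_n → 1 as n → ∞; (ii) for every x > 1, limsup_{n→∞} s_{⌊nx⌋}/s_n < 1; and (iii) T_n/s_n → 1 almost surely as n → ∞. Then Y(t)/v(t) → 1 almost surely as t → 0⁺. -/
import Mathlib


open Filter MeasureTheory Set

set_option maxHeartbeats 1000000 in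
/-- Almost-sure inversion: if `s_{n+1}/s_n → 1`, `limsup_n s_{⌊nx⌋}/s_n < 1` for every
`x > 1`, and `T_n/s_n → 1` almost surely, then `Y(t)/v(t) → 1` almost surely as `t → 0⁺`,
where `Y(t) = inf{n : T_n ≤ t}` and `v(t) = inf{n : s_n ≤ t}`. -/
theorem stmt13 {Ω : Type*} [MeasurableSpace Ω] (P : Measure Ω) [IsProbabilityMeasure P]
    (T : ℕ → Ω → ℝ)
    (hmono : ∀ᵐ ω ∂P, ∀ n, T (n + 1) ω ≤ T n ω)
    (hlim : ∀ᵐ ω ∂P, Tendsto (fun n => T n ω) atTop (nhds 0))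
    (s : ℕ → ℝ) (hspos : ∀ n, 0 < s n) (hsanti : StrictAnti s)
    (hs0 : Tendsto s atTop (nhds 0))
    (Y : ℝ → Ω → ℕ) (hY : ∀ t ω, Y t ω = sInf {n : ℕ | T n ω ≤ t})
    (v : ℝ → ℕ) (hv : ∀ t, v t = sInf {n : ℕ | s n ≤ t})
    (hratio : Tendsto (fun n => s (n + 1) / s n) atTop (nhds 1))
    (hgrad : ∀ x : ℝ, 1 < x →
      Filter.limsup (fun n : ℕ => s ⌊(n : ℝ) * x⌋₊ / s n) atTop < 1)
    (has : ∀ᵐ ω ∂P, Tendsto (fun n => T n ω / s n) atTop (nhds 1)) :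
    ∀ᵐ ω ∂P, Tendsto (fun t => (Y t ω : ℝ) / (v t : ℝ))
      (nhdsWithin 0 (Set.Ioi 0)) (nhds 1) := by
  -- basic facts about v
  have sSetne : ∀ u : ℝ, 0 < u → {n : ℕ | s n ≤ u}.Nonempty := fun u hu => by
    obtain ⟨n, hn⟩ := (hs0.eventually (gt_mem_nhds hu)).exists
    exact ⟨n, hn.le⟩
  have v_mem : ∀ u : ℝ, 0 < u → s (v u) ≤ u := fun u hu => by
    rw [hv]; exact Nat.sInf_mem (sSetne u hu)
  have v_le : ∀ (u : ℝ) (k : ℕ), s k ≤ u → v u ≤ k := fun u k hk => by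
    rw [hv]; exact Nat.sInf_le hk
  have v_big : ∀ (u : ℝ) (M : ℕ), 0 < u → u < s M → M < v u := fun u M hu hus => by
    by_contra h
    push_neg at h
    exact absurd (v_mem u hu) (not_le.2 (lt_of_lt_of_le hus (hsanti.antitone h)))
  filter_upwards [hmono, hlim, has] with ω hm hl hT
  have hTanti : Antitone (fun n => T n ω) := antitone_nat_of_succ_le hm
  rw [Metric.tendsto_nhds]
  intro ε hε
  obtain ⟨x, hxdef⟩ : ∃ y : ℝ, y = 1 + ε / 2 := ⟨_, rfl⟩
  have hx1 : 1 < x := by rw [hxdef]; linarith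
  have hx0 : 0 < x := by linarith
  -- get c
  obtain ⟨c0, hc0l, hc0u⟩ := exists_between (hgrad x hx1)
  obtain ⟨c, hcdef⟩ : ∃ y : ℝ, y = max c0 0 := ⟨_, rfl⟩
  have hc1 : c < 1 := by rw [hcdef]; exact max_lt hc0u one_pos
  have hc0' : 0 ≤ c := by rw [hcdef]; exact le_max_right _ _
  have hc0c : c0 ≤ c := by rw [hcdef]; exact le_max_left _ _
  obtain ⟨δ, hδdef⟩ : ∃ y : ℝ, y = (1 - c) / 2 := ⟨_, rfl⟩
  have hδ0 : 0 < δ := by rw [hδdef]; linarith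
  have h1δ : 0 < 1 - δ := by rw [hδdef]; linarith
  -- eventual gradient bound
  have hbdd : IsBoundedUnder (· ≤ ·) atTop (fun n : ℕ => s ⌊(n : ℝ) * x⌋₊ / s n) := by
    refine isBoundedUnder_of ⟨1, fun n => ?_⟩
    have hfl : n ≤ ⌊(n : ℝ) * x⌋₊ :=
      Nat.le_floor (le_mul_of_one_le_right (Nat.cast_nonneg _) hx1.le)
    exact div_le_one_of_le₀ (hsanti.antitone hfl) (hspos n).le
  obtain ⟨N₂, h₂⟩ := eventually_atTop.1 (eventually_lt_of_limsup_lt hc0l hbdd)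
  -- eventual ratio bound for T
  obtain ⟨N₁, h₁⟩ := eventually_atTop.1
    (hT.eventually (Ioo_mem_nhds (by linarith : 1 - δ < 1) (by linarith : 1 < 1 + δ)))
  obtain ⟨M, hMdef⟩ : ∃ m : ℕ, m = max (max N₁ N₂) 1 := ⟨_, rfl⟩
  have hMN₁ : N₁ ≤ M := by rw [hMdef]; exact le_trans (le_max_left _ _) (le_max_left _ _)
  have hMN₂ : N₂ ≤ M := by rw [hMdef]; exact le_trans (le_max_right _ _) (le_max_left _ _)
  have hM1 : 1 ≤ M := by rw [hMdef]; exact le_max_right _ _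
  obtain ⟨η, hηdef⟩ : ∃ y : ℝ, y = (1 - δ) * s M := ⟨_, rfl⟩
  have hη0 : 0 < η := by rw [hηdef]; exact mul_pos h1δ (hspos M)
  have hηle : η ≤ s M := by rw [hηdef]; nlinarith [hspos M, hδ0]
  filter_upwards [Ioo_mem_nhdsGT_of_mem (show (0:ℝ) ∈ Ico 0 η from ⟨le_refl 0, hη0⟩)]
    with t ht
  obtain ⟨ht0, htη⟩ := ht
  -- facts about Y at t
  have TSetne : {n : ℕ | T n ω ≤ t}.Nonempty := by
    obtain ⟨n, hn⟩ := (hl.eventually (gt_mem_nhds ht0)).exists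
    exact ⟨n, hn.le⟩
  have Y_mem : T (Y t ω) ω ≤ t := by rw [hY]; exact Nat.sInf_mem TSetne
  have Y_le : ∀ k : ℕ, T k ω ≤ t → Y t ω ≤ k := fun k hk => by
    rw [hY]; exact Nat.sInf_le hk
  have htsM : t < s M := lt_of_lt_of_le htη hηle
  have hvtM : M < v t := v_big t M ht0 htsM
  -- T bounds helper
  have hTlb : ∀ n : ℕ, N₁ ≤ n → (1 - δ) * s n < T n ω := fun n hn =>
    (lt_div_iff₀ (hspos n)).1 (h₁ n hn).1
  have hTub : ∀ n : ℕ, N₁ ≤ n → T n ω < (1 + δ) * s n := fun n hn =>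
    (div_lt_iff₀ (hspos n)).1 (h₁ n hn).2
  have hgr : ∀ n : ℕ, N₂ ≤ n → s ⌊(n : ℝ) * x⌋₊ ≤ c * s n := fun n hn => by
    have h5 := (div_lt_iff₀ (hspos n)).1 (h₂ n hn)
    nlinarith [hspos n, hc0c]
  -- upper bound: Y t ≤ v t * x
  have hYub : (Y t ω : ℝ) ≤ (v t : ℝ) * x := by
    obtain ⟨n₀, hn₀def⟩ : ∃ m : ℕ, m = ⌊((v t : ℕ) : ℝ) * x⌋₊ := ⟨_, rfl⟩
    have hvtn₀ : v t ≤ n₀ := by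
      rw [hn₀def]
      exact Nat.le_floor (le_mul_of_one_le_right (Nat.cast_nonneg _) hx1.le)
    have hn₀N₁ : N₁ ≤ n₀ := le_trans hMN₁ (le_trans hvtM.le hvtn₀)
    have hsn₀ : s n₀ ≤ c * s (v t) := by
      rw [hn₀def]; exact hgr (v t) (hMN₂.trans hvtM.le)
    have hT0 : T n₀ ω ≤ t := by
      have h8 := hTub n₀ hn₀N₁
      have h9 : s (v t) ≤ t := v_mem t ht0
      have hk : (1 + δ) * c ≤ 1 := by rw [hδdef]; nlinarith [sq_nonneg (1 - c)]
      have step1 : T n₀ ω ≤ (1 + δ) * (c * s (v t)) :=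
        le_trans h8.le (mul_le_mul_of_nonneg_left hsn₀ (by linarith))
      have step2 : (1 + δ) * (c * s (v t)) ≤ (1 + δ) * c * t := by
        rw [mul_assoc]
        exact mul_le_mul_of_nonneg_left
          (mul_le_mul_of_nonneg_left h9 hc0') (by linarith)
      have step3 : (1 + δ) * c * t ≤ 1 * t := mul_le_mul_of_nonneg_right hk ht0.le
      linarith
    calc (Y t ω : ℝ) ≤ (n₀ : ℝ) := Nat.cast_le.2 (Y_le n₀ hT0)
      _ ≤ ((v t : ℕ) : ℝ) * x := by
          rw [hn₀def]; exact Nat.floor_le (by positivity)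
  -- lower bound: v t ≤ Y t * x
  have hvle : (v t : ℝ) ≤ (Y t ω : ℝ) * x := by
    obtain ⟨n', hn'def⟩ : ∃ m : ℕ, m = v (t / (1 - δ)) := ⟨_, rfl⟩
    have htδ0 : 0 < t / (1 - δ) := div_pos ht0 h1δ
    have htδM : t / (1 - δ) < s M := by
      rw [div_lt_iff₀ h1δ]
      rw [hηdef] at htη
      linarith [mul_comm (s M) (1 - δ)]
    have hn'M : M < n' := by rw [hn'def]; exact v_big _ M htδ0 htδM
    have hmN₁ : N₁ ≤ Y t ω := by
      by_contra h
      push_neg at h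
      have h1 : T N₁ ω ≤ T (Y t ω) ω := hTanti h.le
      have h2 := hTlb N₁ le_rfl
      have h3 : s M ≤ s N₁ := hsanti.antitone hMN₁
      rw [hηdef] at htη
      nlinarith [Y_mem]
    have hsm : s (Y t ω) ≤ t / (1 - δ) := by
      have h4 := hTlb (Y t ω) hmN₁
      rw [le_div_iff₀ h1δ]
      linarith [Y_mem, mul_comm (s (Y t ω)) (1 - δ)]
    have hn'm : n' ≤ Y t ω := by rw [hn'def]; exact v_le _ _ hsm
    have hsn' : s ⌊(n' : ℝ) * x⌋₊ ≤ t := by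
      have h5 : s ⌊(n' : ℝ) * x⌋₊ ≤ c * s n' := hgr n' (hMN₂.trans hn'M.le)
      have h6 : s n' ≤ t / (1 - δ) := by rw [hn'def]; exact v_mem _ htδ0
      have h8 : c * s n' ≤ c * (t / (1 - δ)) := mul_le_mul_of_nonneg_left h6 hc0'
      have h9 : c * (t / (1 - δ)) ≤ (1 - δ) * (t / (1 - δ)) :=
        mul_le_mul_of_nonneg_right (by rw [hδdef]; linarith)
          (div_nonneg ht0.le h1δ.le)
      have h10 : (1 - δ) * (t / (1 - δ)) = t := by field_simp
      linarith
    have h7 : v t ≤ ⌊(n' : ℝ) * x⌋₊ := v_le t _ hsn'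
    calc (v t : ℝ) ≤ (⌊(n' : ℝ) * x⌋₊ : ℝ) := Nat.cast_le.2 h7
      _ ≤ (n' : ℝ) * x := Nat.floor_le (by positivity)
      _ ≤ (Y t ω : ℝ) * x :=
          mul_le_mul_of_nonneg_right (Nat.cast_le.2 hn'm) hx0.le
  -- conclude
  have hv0 : (0 : ℝ) < (v t : ℝ) := by
    have h13 : 0 < v t := lt_of_le_of_lt (Nat.zero_le M) hvtM
    exact_mod_cast h13
  have hub : (Y t ω : ℝ) / (v t : ℝ) ≤ x := by
    rw [div_le_iff₀ hv0]; linarith [hYub]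
  have hY0 : (0 : ℝ) ≤ (Y t ω : ℝ) := Nat.cast_nonneg _
  have hlb : 1 - ε / 2 ≤ (Y t ω : ℝ) / (v t : ℝ) := by
    rw [le_div_iff₀ hv0]
    rcases le_or_gt ε 2 with hε2 | hε2
    · have h11 := mul_le_mul_of_nonneg_left hvle (show (0:ℝ) ≤ 1 - ε / 2 by linarith)
      rw [hxdef] at h11
      nlinarith [sq_nonneg ε]
    · have h12 : (1 - ε / 2) * (v t : ℝ) ≤ 0 :=
        mul_nonpos_of_nonpos_of_nonneg (by linarith) hv0.le
      linarith
  rw [Real.dist_eq, abs_lt]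
  constructor <;> [linarith; (rw [hxdef] at hub; linarith)]
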